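/- Translation correctness for innermost scope (Theorem 2(a)): for every formula φ, state ω, and agent i, (M, ω, i) ⊨^in φ iff (M_c, ω) ⊨ φ_i^in, where the translation is: p_i^in = (p,i); (ψ ∧ ψ')_i^in = ψ_i^in ∧ ψ'_i^in; (¬ψ)_i^in = ¬(ψ_i^in); (a₁pr_j(φ₁)+...+a_k pr_j(φ_k) ≥ b)_i^in = a₁pr_j((φ₁)_j^in)+...+a_k pr_j((φ_k)_j^in) ≥ b (note the inner translations use j, not i); and (C_G ψ)_i^in = C_G(∧_{j∈G} B_j ψ_j^in). -/

import Mathlib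

open scoped ENNReal

/-- Formulas of the language `L_n^C(Φ)`: primitive propositions, negation, conjunction,
linear probability formulas `a₁ pr_j(φ₁) + ... + a_k pr_j(φ_k) ≥ b`, and common belief. -/
inductive Formula (Φ N : Type) : Type where
  | tru : Formula Φ N
  | prim : Φ → Formula Φ N
  | neg : Formula Φ N → Formula Φ N
  | and : Formula Φ N → Formula Φ N → Formula Φ N
  | prob : N → (k : ℕ) → (Fin k → ℚ) → (Fin k → Formula Φ N) → ℚ → Formula Φ N
  | cb : Finset N → Formula Φ N → Formula Φ N

/-- An epistemic probability structure (with discrete probability measures) satisfying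
A1–A4: a partition `part i` for each player, a discrete probability measure `mu i ω`
supported on the cell `part i ω` (A1), constant on cells (A2), and an interpretation
`interp i` of primitive propositions for each player.  (A3, A4 are automatic since
all sets are measurable for discrete measures.) -/
structure EPS (Ω Φ N : Type) where
  part : N → Ω → Set Ω
  mu : N → Ω → Ω → ℝ≥0∞
  interp : N → Ω → Φ → Prop
  mem_part : ∀ i ω, ω ∈ part i ω
  part_cell : ∀ i ω ω', ω' ∈ part i ω → part i ω' = part i ω
  mu_prob : ∀ i ω, ∑' ω', mu i ω ω' = 1
  mu_supp : ∀ i ω ω', ω' ∉ part i ω → mu i ω ω' = 0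
  mu_const : ∀ i ω ω', ω' ∈ part i ω → mu i ω' = mu i ω

namespace EPS

variable {Ω Φ N : Type}

/-- The measure `μ_{j,ω}(S)` of a set `S`. -/
noncomputable def mval (M : EPS Ω Φ N) (j : N) (ω : Ω) (S : Set Ω) : ℝ≥0∞ :=
  ∑' x : S, M.mu j ω x

/-- The semantic belief operator: `ω ∈ Bset j S` iff `μ_{j,ω}(S ∩ Π_j(ω)) = 1`. -/
def Bset (M : EPS Ω Φ N) (j : N) (S : Set Ω) : Set Ω :=
  {ω | M.mval j ω (S ∩ M.part j ω) = 1}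

/-- The semantic mutual-belief operator for the group `G`. -/
def Eset (M : EPS Ω Φ N) (G : Finset N) (S : Set Ω) : Set Ω :=
  ⋂ j ∈ G, M.Bset j S

/-- Iterates of the mutual-belief operator. -/
def EIter (M : EPS Ω Φ N) (G : Finset N) : ℕ → Set Ω → Set Ω
  | 0, S => S
  | k + 1, S => M.Eset G (M.EIter G k S)

/-- Outermost-scope semantics: `[[φ]]^ou_i = {ω : (M,ω,i) ⊨^ou φ}`.  Probability
formulas for agent `j` are evaluated using `j`'s measure applied to the *outer*
agent `i`'s interpretation of the inner formulas. -/
def satOu (M : EPS Ω Φ N) : Formula Φ N → N → Set Ω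
  | .tru, _ => Set.univ
  | .prim p, i => {ω | M.interp i ω p}
  | .neg φ, i => (M.satOu φ i)ᶜ
  | .and φ ψ, i => M.satOu φ i ∩ M.satOu ψ i
  | .prob j _ a φs b, i =>
      {ω | (b : ℝ) ≤ ∑ m, (a m : ℝ) * (M.mval j ω (M.satOu (φs m) i ∩ M.part j ω)).toReal}
  | .cb G φ, i => ⋂ k : ℕ, M.EIter G k (M.Eset G (M.satOu φ i))

/-- Innermost-scope semantics: `[[φ]]^in_i = {ω : (M,ω,i) ⊨^in φ}`.  Probability
formulas for agent `j` are evaluated using `j`'s measure applied to `j`'s *own*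
interpretation of the inner formulas. -/
def satIn (M : EPS Ω Φ N) : Formula Φ N → N → Set Ω
  | .tru, _ => Set.univ
  | .prim p, i => {ω | M.interp i ω p}
  | .neg φ, i => (M.satIn φ i)ᶜ
  | .and φ ψ, i => M.satIn φ i ∩ M.satIn ψ i
  | .prob j _ a φs b, _ =>
      {ω | (b : ℝ) ≤ ∑ m, (a m : ℝ) * (M.mval j ω (M.satIn (φs m) j ∩ M.part j ω)).toReal}
  | .cb G φ, _ => ⋂ k : ℕ, M.EIter G k (⋂ j ∈ G, M.Bset j (M.satIn φ j))

end EPS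

/-- `B_j φ`, an abbreviation for `pr_j(φ) ≥ 1` (equivalently `pr_j(φ) = 1`). -/
def Bf {Φ N : Type} (j : N) (φ : Formula Φ N) : Formula Φ N :=
  .prob j 1 (fun _ => 1) (fun _ => φ) 1

/-- Conjunction of a list of formulas. -/
def bigAnd {Φ N : Type} (l : List (Formula Φ N)) : Formula Φ N :=
  l.foldr .and .tru

/-- The mutual-belief formula `E_G φ = ⋀_{j ∈ G} B_j φ`. -/
noncomputable def Ef {Φ N : Type} (G : Finset N) (φ : Formula Φ N) : Formula Φ N :=
  bigAnd (G.toList.map (fun j => Bf j φ))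

/-- The innermost-scope translation `φ ↦ φ_i^in` into the language over `Φ × N`:
probability operators `pr_j` translate their inner formulas with `j` (not `i`), and
`(C_G ψ)_i^in = C_G (⋀_{j∈G} B_j ψ_j^in)`. -/
noncomputable def trIn {Φ N : Type} (i : N) : Formula Φ N → Formula (Φ × N) N
  | .tru => .tru
  | .prim p => .prim (p, i)
  | .neg φ => .neg (trIn i φ)
  | .and φ ψ => .and (trIn i φ) (trIn i ψ)
  | .prob j k a φs b => .prob j k a (fun m => trIn j (φs m)) b
  | .cb G φ => .cb G (bigAnd (G.toList.map (fun j => Bf j (trIn j φ))))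
termination_by structural φ => φ



namespace EPS

variable {Ω Φ N : Type}

lemma mval_le_one (M : EPS Ω Φ N) (j : N) (ω : Ω) (S : Set Ω) :
    M.mval j ω S ≤ 1 := by
  rw [← M.mu_prob j ω, mval, tsum_subtype]
  exact ENNReal.tsum_le_tsum (fun x => Set.indicator_le_self S _ x)

lemma mval_nonempty (M : EPS Ω Φ N) {j : N} {ω : Ω} {S : Set Ω}
    (h : M.mval j ω S = 1) : S.Nonempty := by
  by_contra hne
  rw [Set.not_nonempty_iff_eq_empty] at hne
  subst hne
  rw [mval, tsum_empty] at h
  exact zero_ne_one h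

lemma mem_Bset_iff (M : EPS Ω Φ N) (j : N) (ω : Ω) (S : Set Ω) :
    ω ∈ M.Bset j S ↔ (1 : ℝ) ≤ (M.mval j ω (S ∩ M.part j ω)).toReal := by
  have hle : M.mval j ω (S ∩ M.part j ω) ≤ 1 := M.mval_le_one j ω _
  have hne : M.mval j ω (S ∩ M.part j ω) ≠ ⊤ := ne_top_of_le_ne_top (by simp) hle
  constructor
  · intro h
    simp [Bset] at h
    simp [h]
  · intro h
    have : (1 : ℝ≥0∞) ≤ M.mval j ω (S ∩ M.part j ω) := by
      rw [← ENNReal.toReal_le_toReal (by simp) hne]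
      simpa using h
    exact le_antisymm hle this

lemma Bset_cell (M : EPS Ω Φ N) {j : N} {ω ω' : Ω} (h : ω' ∈ M.part j ω)
    (S : Set Ω) : ω' ∈ M.Bset j S ↔ ω ∈ M.Bset j S := by
  have h1 := M.mu_const j ω ω' h
  have h2 := M.part_cell j ω ω' h
  simp only [Bset, Set.mem_setOf_eq, mval]
  rw [h1, h2]

lemma Eset_fix (M : EPS Ω Φ N) (G : Finset N) (A : N → Set Ω) :
    M.Eset G (⋂ j ∈ G, M.Bset j (A j)) ⊆ ⋂ j ∈ G, M.Bset j (A j) := by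
  intro ω hω
  set T := ⋂ j ∈ G, M.Bset j (A j) with hT
  refine Set.mem_iInter₂.2 fun j hj => ?_
  have h1 : ω ∈ M.Bset j T := by
    have := Set.mem_iInter₂.1 hω j hj
    exact this
  have h1' : M.mval j ω (T ∩ M.part j ω) = 1 := h1
  obtain ⟨x, hxT, hxP⟩ := M.mval_nonempty h1'
  have hx : x ∈ M.Bset j (A j) := Set.mem_iInter₂.1 hxT j hj
  exact (M.Bset_cell hxP (A j)).1 hx

lemma EIter_Eset (M : EPS Ω Φ N) (G : Finset N) :
    ∀ (k : ℕ) (S : Set Ω), M.EIter G k (M.Eset G S) = M.EIter G (k + 1) S := by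
  intro k
  induction k with
  | zero => intro S; rfl
  | succ n ih =>
      intro S
      show M.Eset G (M.EIter G n (M.Eset G S)) = M.Eset G (M.EIter G (n + 1) S)
      rw [ih]

lemma cb_eq (M : EPS Ω Φ N) (G : Finset N) (A : N → Set Ω) :
    (⋂ k, M.EIter G k (M.Eset G (⋂ j ∈ G, M.Bset j (A j)))) =
      ⋂ k, M.EIter G k (⋂ j ∈ G, M.Bset j (A j)) := by
  set T := ⋂ j ∈ G, M.Bset j (A j) with hT
  ext ω
  simp only [Set.mem_iInter]
  constructor
  · intro h k
    cases k with
    | zero => exact M.Eset_fix G A (h 0)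
    | succ n => rw [← M.EIter_Eset G n T]; exact h n
  · intro h k
    rw [M.EIter_Eset G k T]
    exact h (k + 1)

end EPS

lemma satOu_Bf {Ω Φ N : Type} (M : EPS Ω Φ N) (j : N) (φ : Formula Φ N) (i : N) :
    M.satOu (Bf j φ) i = M.Bset j (M.satOu φ i) := by
  ext ω
  rw [M.mem_Bset_iff]
  simp [Bf, EPS.satOu]

lemma satOu_bigAnd {Ω Φ N : Type} (M : EPS Ω Φ N) (l : List (Formula Φ N)) (i : N) (ω : Ω) :
    ω ∈ M.satOu (bigAnd l) i ↔ ∀ f ∈ l, ω ∈ M.satOu f i := by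
  induction l with
  | nil => simp [bigAnd, EPS.satOu]
  | cons f l ih =>
      simp only [bigAnd, List.foldr_cons] at *
      constructor
      · rintro ⟨h1, h2⟩ g hg
        rcases List.mem_cons.1 hg with rfl | hg
        · exact h1
        · exact ih.1 h2 g hg
      · intro h
        exact ⟨h f List.mem_cons_self, ih.2 fun g hg => h g (List.mem_cons_of_mem _ hg)⟩

/-- Translation correctness for innermost scope (Theorem 2(a)): for every formula `φ`,
state `ω`, and agent `i`, `(M,ω,i) ⊨^in φ` iff `(M_c,ω) ⊨ φ_i^in`, where `M_c` is the
corresponding common-interpretation structure over `Φ × N` with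
`π(ω)(p,j) = π_j(ω)(p)`, and the standard semantics of `M_c` is rendered as `satOu`
at an arbitrary agent `i₀`. -/
theorem translation_correct_in
    {Ω Φ N : Type} (M : EPS Ω Φ N) (Mc : EPS Ω (Φ × N) N)
    (hpart : Mc.part = M.part) (hmu : Mc.mu = M.mu)
    (hinterp : Mc.interp = fun _ ω q => M.interp q.2 ω q.1) :
    ∀ (φ : Formula Φ N) (ω : Ω) (i i₀ : N),
      ω ∈ M.satIn φ i ↔ ω ∈ Mc.satOu (trIn i φ) i₀ := by
  have hv : Mc.mval = M.mval := by
    funext j ω S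
    simp [EPS.mval, hmu]
  have hB : Mc.Bset = M.Bset := by
    funext j S
    simp [EPS.Bset, hv, hpart]
  have hE : Mc.Eset = M.Eset := by
    funext G S
    simp [EPS.Eset, hB]
  have hI : Mc.EIter = M.EIter := by
    funext G k
    induction k with
    | zero => rfl
    | succ n ih => funext S; show Mc.Eset G (Mc.EIter G n S) = _; rw [hE, ih]; rfl
  intro φ
  induction φ with
  | tru => intro ω i i₀; simp [EPS.satIn, EPS.satOu, trIn]
  | prim p => intro ω i i₀; simp [EPS.satIn, EPS.satOu, trIn, hinterp]
  | neg φ ih => intro ω i i₀; simp only [EPS.satIn, EPS.satOu, trIn, Set.mem_compl_iff]; rw [ih]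
  | and φ ψ ih1 ih2 =>
      intro ω i i₀
      simp only [EPS.satIn, EPS.satOu, trIn, Set.mem_inter_iff]
      rw [ih1, ih2]
  | prob j k a φs b ih =>
      intro ω i i₀
      have hsets : ∀ m, Mc.satOu (trIn j (φs m)) i₀ = M.satIn (φs m) j := by
        intro m
        ext ω'
        exact (ih m ω' j i₀).symm
      simp only [EPS.satIn, EPS.satOu, trIn, Set.mem_setOf_eq, hv, hpart]
      constructor <;> intro h <;> [skip; skip] <;>
        · refine le_trans h (le_of_eq ?_)
          congr 1
          funext m
          rw [hsets m]
  | cb G φ ih =>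
      intro ω i i₀
      have hsets : ∀ j, Mc.satOu (trIn j φ) i₀ = M.satIn φ j := by
        intro j
        ext ω'
        exact (ih ω' j i₀).symm
      have hS : Mc.satOu (bigAnd (G.toList.map (fun j => Bf j (trIn j φ)))) i₀ =
          ⋂ j ∈ G, M.Bset j (M.satIn φ j) := by
        ext ω'
        rw [satOu_bigAnd]
        simp only [List.mem_map, Set.mem_iInter]
        constructor
        · intro h j hj
          have := h (Bf j (trIn j φ)) ⟨j, Finset.mem_toList.2 hj, rfl⟩
          rw [satOu_Bf, hB, hsets j] at this
          exact this
        · rintro h f ⟨j, hj, rfl⟩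
          rw [satOu_Bf, hB, hsets j]
          exact h j (Finset.mem_toList.1 hj)
      show _ ↔ ω ∈ Mc.satOu (.cb G (bigAnd (G.toList.map (fun j => Bf j (trIn j φ))))) i₀
      simp only [EPS.satOu, EPS.satIn, hS, hE, hI]
      rw [M.cb_eq G (fun j => M.satIn φ j)]
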